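/- Let O ⊆ ℝ × ℝ^m be open and let G : O → ℝ^m be differentiable, satisfying for all (t,x) ∈ O and all i ∈ [m] the implicit system G_i(t,x) = e^{−x_i} · exp( t ∑_{l=1}^m A_{il} p_l (G_l(t,x) − 1) ), and assume det( I − t·diag(G(t,x))·A·P ) ≠ 0 for all (t,x) ∈ O. Then G satisfies ∂G/∂t (t,x) = −(∇G(t,x)) A P (G(t,x) − 𝟙) on O, and consequently the function u : O → ℝ^m defined by u_i(t,x) = p_i G_i(t,x) satisfies ∂u/∂t (t,x) = −(∇u(t,x)) A (u(t,x) − p) on O. -/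

import Mathlib

/-- Partial derivative in the time variable of a map `G : ℝ × ℝ^m → ℝ^m` (componentwise). -/
noncomputable def pderivT {m : ℕ} (G : ℝ → (Fin m → ℝ) → Fin m → ℝ)
    (t : ℝ) (x : Fin m → ℝ) (i : Fin m) : ℝ :=
  fderiv ℝ (fun q : ℝ × (Fin m → ℝ) => G q.1 q.2 i) (t, x) (1, 0)

/-- Partial derivative in the `j`-th spatial variable of a map `G : ℝ × ℝ^m → ℝ^m`. -/
noncomputable def pderivX {m : ℕ} (G : ℝ → (Fin m → ℝ) → Fin m → ℝ)
    (t : ℝ) (x : Fin m → ℝ) (i j : Fin m) : ℝ :=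
  fderiv ℝ (fun q : ℝ × (Fin m → ℝ) => G q.1 q.2 i) (t, x) (0, Pi.single j 1)

/-- A differentiable solution of the implicit system
`G_i = e^{-x_i} exp(t ∑_l A_{il} p_l (G_l - 1))` on an open set on which
`det(I - t·diag(G)·A·P) ≠ 0` satisfies `∂G/∂t = -(∇G) A P (G - 𝟙)`; consequently
`u_i = p_i G_i` satisfies the Burgers-type PDE `∂u/∂t = -(∇u) A (u - p)`. -/
theorem implicit_system_solves_pde
    (m : ℕ) (hm : 1 ≤ m)
    (A : Matrix (Fin m) (Fin m) ℝ) (hAsymm : A.IsSymm) (hA0 : ∀ i j, 0 ≤ A i j)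
    (p : Fin m → ℝ) (hp0 : ∀ i, 0 ≤ p i) (hp1 : ∑ i, p i = 1)
    (O : Set (ℝ × (Fin m → ℝ))) (hO : IsOpen O)
    (G : ℝ → (Fin m → ℝ) → Fin m → ℝ)
    (hGdiff : ∀ t : ℝ, ∀ x : Fin m → ℝ, (t, x) ∈ O → ∀ i : Fin m,
      DifferentiableAt ℝ (fun q : ℝ × (Fin m → ℝ) => G q.1 q.2 i) (t, x))
    (hGfix : ∀ t : ℝ, ∀ x : Fin m → ℝ, (t, x) ∈ O → ∀ i : Fin m,
      G t x i = Real.exp (-x i) *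
        Real.exp (t * ∑ l, A i l * p l * (G t x l - 1)))
    (hdet : ∀ t : ℝ, ∀ x : Fin m → ℝ, (t, x) ∈ O →
      ((1 : Matrix (Fin m) (Fin m) ℝ)
        - t • (Matrix.diagonal (G t x) * A * Matrix.diagonal p)).det ≠ 0) :
    ∀ t : ℝ, ∀ x : Fin m → ℝ, (t, x) ∈ O →
      -- ∂G/∂t = -(∇G) A P (G - 𝟙)
      (∀ i : Fin m,
        pderivT G t x i
          = -∑ j, pderivX G t x i j * (∑ k, A j k * p k * (G t x k - 1)))
      ∧
      -- consequently, u := (p_i G_i)_i satisfies ∂u/∂t = -(∇u) A (u - p)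
      (∀ i : Fin m,
        p i * pderivT G t x i
          = -∑ j, (p i * pderivX G t x i j) * (∑ k, A j k * (p k * G t x k - p k))) := by
  intro t x hmem
  -- key derivative identity from the implicit equation
  have key : ∀ (i : Fin m) (v : ℝ × (Fin m → ℝ)),
      fderiv ℝ (fun q : ℝ × (Fin m → ℝ) => G q.1 q.2 i) (t, x) v
        = G t x i * (-(v.2 i) + (v.1 * (∑ l, A i l * p l * (G t x l - 1))
            + t * ∑ l, A i l * p l *
              fderiv ℝ (fun q : ℝ × (Fin m → ℝ) => G q.1 q.2 l) (t, x) v)) := by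
    intro i v
    have hS : HasFDerivAt (fun q : ℝ × (Fin m → ℝ) => ∑ l, A i l * p l * (G q.1 q.2 l - 1))
        (∑ l, (A i l * p l) • fderiv ℝ (fun q : ℝ × (Fin m → ℝ) => G q.1 q.2 l) (t, x))
        (t, x) := by
      apply HasFDerivAt.fun_sum
      intro l _
      exact (((hGdiff t x hmem l).hasFDerivAt).sub_const 1).const_mul (A i l * p l)
    have hfst : HasFDerivAt (fun q : ℝ × (Fin m → ℝ) => q.1)
        (ContinuousLinearMap.fst ℝ ℝ (Fin m → ℝ)) (t, x) :=
      (ContinuousLinearMap.fst ℝ ℝ (Fin m → ℝ)).hasFDerivAt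
    have hproj : HasFDerivAt (fun q : ℝ × (Fin m → ℝ) => q.2 i)
        ((ContinuousLinearMap.proj i).comp (ContinuousLinearMap.snd ℝ ℝ (Fin m → ℝ))) (t, x) :=
      ((ContinuousLinearMap.proj i).comp (ContinuousLinearMap.snd ℝ ℝ (Fin m → ℝ))).hasFDerivAt
    have hh := (hproj.neg).add (hfst.mul hS)
    have hexp := hh.exp
    have hEq : (fun q : ℝ × (Fin m → ℝ) => G q.1 q.2 i)
        =ᶠ[nhds (t, x)] fun q : ℝ × (Fin m → ℝ) =>
          Real.exp (-q.2 i + q.1 * ∑ l, A i l * p l * (G q.1 q.2 l - 1)) := by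
      apply Filter.eventuallyEq_of_mem (hO.mem_nhds hmem)
      intro q hq
      have h1 := hGfix q.1 q.2 (by simpa using hq) i
      show G q.1 q.2 i = Real.exp (-q.2 i + q.1 * ∑ l, A i l * p l * (G q.1 q.2 l - 1))
      rw [h1, ← Real.exp_add]
    have hG' := hexp.congr_of_eventuallyEq hEq
    rw [hG'.fderiv]
    have hGi : Real.exp (-x i + t * ∑ l, A i l * p l * (G t x l - 1)) = G t x i := by
      rw [Real.exp_add]; exact (hGfix t x hmem i).symm
    simp only [ContinuousLinearMap.smul_apply, ContinuousLinearMap.add_apply,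
      ContinuousLinearMap.neg_apply, ContinuousLinearMap.comp_apply,
      ContinuousLinearMap.coe_fst', ContinuousLinearMap.coe_snd',
      ContinuousLinearMap.proj_apply, ContinuousLinearMap.sum_apply, smul_eq_mul,
      Pi.add_apply, Pi.neg_apply, Pi.mul_apply]
    rw [hGi]
    ring
  set T : Fin m → ℝ := pderivT G t x with hT
  set X : Fin m → Fin m → ℝ := pderivX G t x with hX
  set S : Fin m → ℝ := fun j => ∑ k, A j k * p k * (G t x k - 1) with hS
  have Ht : ∀ i, T i = G t x i * (S i + t * ∑ l, A i l * p l * T l) := by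
    intro i
    have h := key i (1, (0 : Fin m → ℝ))
    simp only [Pi.zero_apply, neg_zero, one_mul, zero_add] at h
    rw [hT]
    simp only [pderivT]
    rw [h]
  have Hx : ∀ i j, X i j
      = G t x i * (-((Pi.single j 1 : Fin m → ℝ) i) + t * ∑ l, A i l * p l * X l j) := by
    intro i j
    have h := key i ((0 : ℝ), Pi.single j (1:ℝ))
    simp only [zero_mul, zero_add] at h
    rw [hX]
    simp only [pderivX]
    rw [h]
  -- the vector vv = ∂ₜG + (∇G)·S satisfies (I - t diag(G) A P) vv = 0
  set vv : Fin m → ℝ := fun i => T i + ∑ j, X i j * S j with hvv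
  have hv : ∀ i, vv i = t * ∑ l, (G t x i * (A i l * p l)) * vv l := by
    intro i
    have e1 : ∑ j, X i j * S j
        = ∑ j, (G t x i * (-((Pi.single j 1 : Fin m → ℝ) i) + t * ∑ l, A i l * p l * X l j)) * S j :=
      Finset.sum_congr rfl fun j _ => by rw [← Hx i j]
    have e2 : ∀ j, (G t x i * (-((Pi.single j 1 : Fin m → ℝ) i) + t * ∑ l, A i l * p l * X l j)) * S j
        = t * ∑ l, (G t x i * (A i l * p l)) * (X l j * S j)
          - G t x i * ((Pi.single j 1 : Fin m → ℝ) i * S j) := by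
      intro j
      have e21 : ∑ l, (G t x i * (A i l * p l)) * (X l j * S j)
          = G t x i * S j * ∑ l, A i l * p l * X l j := by
        rw [Finset.mul_sum]
        exact Finset.sum_congr rfl fun l _ => by ring
      rw [e21]; ring
    have e3 : ∑ j, G t x i * ((Pi.single j 1 : Fin m → ℝ) i * S j) = G t x i * S i := by
      rw [← Finset.mul_sum]
      congr 1
      simp [Pi.single_apply]
    have e4 : ∑ j, (t * ∑ l, (G t x i * (A i l * p l)) * (X l j * S j))
        = t * ∑ l, (G t x i * (A i l * p l)) * ∑ j, X l j * S j := by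
      rw [← Finset.mul_sum]
      congr 1
      rw [Finset.sum_comm]
      exact Finset.sum_congr rfl fun l _ => by rw [Finset.mul_sum]
    have lhs : vv i = G t x i * (S i + t * ∑ l, A i l * p l * T l)
        + (t * (∑ l, (G t x i * (A i l * p l)) * ∑ j, X l j * S j) - G t x i * S i) := by
      rw [hvv]
      simp only
      rw [Ht i, e1]
      rw [Finset.sum_congr rfl fun j _ => e2 j, Finset.sum_sub_distrib, e3, e4]
    rw [lhs]
    have rhs : ∑ l, (G t x i * (A i l * p l)) * vv l
        = ∑ l, ((G t x i * (A i l * p l)) * T l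
            + (G t x i * (A i l * p l)) * ∑ j, X l j * S j) :=
      Finset.sum_congr rfl fun l _ => by rw [hvv]; ring
    rw [rhs, Finset.sum_add_distrib]
    have e5 : ∑ l, (G t x i * (A i l * p l)) * T l = G t x i * ∑ l, A i l * p l * T l := by
      rw [Finset.mul_sum]
      exact Finset.sum_congr rfl fun l _ => by ring
    rw [e5]
    ring
  -- invert the matrix
  set M : Matrix (Fin m) (Fin m) ℝ := Matrix.diagonal (G t x) * A * Matrix.diagonal p with hM
  set N : Matrix (Fin m) (Fin m) ℝ := 1 - t • M with hN
  have hNv : N.mulVec vv = 0 := by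
    funext i
    have hMe : ∀ l, M i l = G t x i * A i l * p l := by
      intro l
      rw [hM, Matrix.mul_diagonal, Matrix.diagonal_mul]
    rw [hN]
    simp only [Matrix.sub_mulVec, Matrix.one_mulVec, Pi.sub_apply,
      Matrix.smul_mulVec, Pi.smul_apply, smul_eq_mul, Pi.zero_apply]
    have hMv : (M.mulVec vv) i = ∑ l, (G t x i * (A i l * p l)) * vv l := by
      simp only [Matrix.mulVec, dotProduct]
      exact Finset.sum_congr rfl fun l _ => by rw [hMe l]; ring
    rw [hMv, ← hv i]
    ring
  have hvz : vv = 0 := by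
    have hu : IsUnit N.det := isUnit_iff_ne_zero.mpr (by rw [hN]; exact hdet t x hmem)
    calc vv = (N⁻¹ * N).mulVec vv := by rw [Matrix.nonsing_inv_mul _ hu, Matrix.one_mulVec]
      _ = N⁻¹.mulVec (N.mulVec vv) := (Matrix.mulVec_mulVec vv N⁻¹ N).symm
      _ = 0 := by rw [hNv, Matrix.mulVec_zero]
  have first : ∀ i, T i = -∑ j, X i j * S j := by
    intro i
    have h : vv i = 0 := by rw [hvz]; rfl
    rw [hvv] at h
    simp only at h
    linarith [h]
  constructor
  · intro i
    exact first i
  · intro i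
    have hsum : ∀ j, (∑ k, A j k * (p k * G t x k - p k)) = S j := by
      intro j
      rw [hS]
      exact Finset.sum_congr rfl fun k _ => by ring
    rw [first i, mul_neg, Finset.mul_sum]
    congr 1
    exact Finset.sum_congr rfl fun j _ => by rw [hsum j]; ring
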